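/- Let v and w be purely imaginary octonions with ‖v‖ = ‖w‖ = 1. Then for every octonion x, (v̂ ∘ ŵ) ∘ x̂ ∘ (ŵ ∘ v̂) = ŷ where y = s_v(s_w(x)) and s_u(z) := 2⟨z,u⟩u − z. That is, conjugation by v̂ ∘ ŵ (whose inverse is ŵ ∘ v̂) sends x̂ to the hat of the composition of the reflection along w followed by the reflection along v applied to x. -/

import Mathlib

set_option maxHeartbeats 2000000

noncomputable section

/-- The octonions, realized as pairs of real quaternions (Cayley–Dickson construction). -/
abbrev Octonion : Type := Quaternion ℝ × Quaternion ℝ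

/-- Octonion multiplication: `(a,b)·(c,d) = (a·c − conj(d)·b, d·a + b·conj(c))`. -/
def omul (x y : Octonion) : Octonion :=
  (x.1 * y.1 - star y.2 * x.2, y.2 * x.1 + x.2 * star y.1)

/-- Octonion conjugation: `conj (a,b) = (conj a, −b)`. -/
def oconj (x : Octonion) : Octonion := (star x.1, -x.2)

/-- The unit octonion `1 = (1,0)`. -/
def oone : Octonion := (1, 0)

/-- The real inner product `⟨(a,b),(c,d)⟩ = Re(a·conj c) + Re(b·conj d)` on the octonions. -/
def oinner (x y : Octonion) : ℝ := (x.1 * star y.1).re + (x.2 * star y.2).re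

/-- The Clifford-algebra embedding: `x̂ (y,z) = (−conj(x)·z, x·y)` on `𝕆 × 𝕆`. -/
def hat (x : Octonion) (p : Octonion × Octonion) : Octonion × Octonion :=
  (-(omul (oconj x) p.2), omul x p.1)

/-- The reflection along a unit octonion `u`: `s_u(z) = 2⟨z,u⟩u − z`. -/
def oreflect (u z : Octonion) : Octonion := (2 * oinner z u) • u - z

lemma anticomm (x y : Octonion) (p : Octonion × Octonion) :
    hat x (hat y p) + hat y (hat x p) = (-(2 * oinner x y)) • p := by
  obtain ⟨x1, x2⟩ := x
  obtain ⟨y1, y2⟩ := y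
  obtain ⟨⟨p1, p2⟩, ⟨p3, p4⟩⟩ := p
  simp only [hat, omul, oconj, oinner, Prod.ext_iff, Prod.smul_mk, Prod.mk_add_mk, Prod.neg_mk,
    Prod.fst, Prod.snd]
  refine ⟨⟨?_, ?_⟩, ?_, ?_⟩ <;>
    (ext <;> simp [Quaternion.re_mul, Quaternion.imI_mul, Quaternion.imJ_mul, Quaternion.imK_mul] <;> ring)

lemma hat_sq (u : Octonion) (p : Octonion × Octonion) :
    hat u (hat u p) = (-(oinner u u)) • p := by
  obtain ⟨u1, u2⟩ := u
  obtain ⟨⟨p1, p2⟩, ⟨p3, p4⟩⟩ := p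
  simp only [hat, omul, oconj, oinner, Prod.ext_iff, Prod.smul_mk, Prod.neg_mk,
    Prod.fst, Prod.snd]
  refine ⟨⟨?_, ?_⟩, ?_, ?_⟩ <;>
    (ext <;> simp [Quaternion.re_mul, Quaternion.imI_mul, Quaternion.imJ_mul, Quaternion.imK_mul] <;> ring)

lemma omul_smul_left (c : ℝ) (x y : Octonion) : omul (c • x) y = c • omul x y := by
  simp [omul, smul_sub, smul_add, mul_smul_comm, smul_mul_assoc, Prod.smul_mk]

lemma omul_smul_right (c : ℝ) (x y : Octonion) : omul x (c • y) = c • omul x y := by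
  simp [omul, smul_sub, smul_add, mul_smul_comm, smul_mul_assoc, Prod.smul_mk]

lemma omul_sub_left (x y z : Octonion) : omul (x - y) z = omul x z - omul y z := by
  simp only [omul, Prod.fst_sub, Prod.snd_sub, star_sub, sub_mul, mul_sub, Prod.mk_sub_mk,
    Prod.mk.injEq]
  constructor <;> abel

lemma omul_sub_right (x y z : Octonion) : omul x (y - z) = omul x y - omul x z := by
  simp only [omul, Prod.fst_sub, Prod.snd_sub, star_sub, sub_mul, mul_sub, Prod.mk_sub_mk,
    Prod.mk.injEq]
  constructor <;> abel

lemma oconj_smul (c : ℝ) (x : Octonion) : oconj (c • x) = c • oconj x := by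
  simp [oconj, Prod.smul_mk, star_smul]

lemma oconj_sub (x y : Octonion) : oconj (x - y) = oconj x - oconj y := by
  simp [oconj, Prod.ext_iff, star_sub]; abel

lemma hat_smul_arg (c : ℝ) (u : Octonion) (p : Octonion × Octonion) :
    hat (c • u) p = c • hat u p := by
  simp [hat, oconj_smul, omul_smul_left, Prod.smul_mk]

lemma hat_sub_arg (u w : Octonion) (p : Octonion × Octonion) :
    hat (u - w) p = hat u p - hat w p := by
  simp only [hat, oconj_sub, omul_sub_left, Prod.mk_sub_mk, Prod.mk.injEq]
  exact ⟨by abel, trivial⟩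

lemma hat_smul_p (c : ℝ) (u : Octonion) (p : Octonion × Octonion) :
    hat u (c • p) = c • hat u p := by
  simp [hat, omul_smul_right, Prod.smul_mk]

lemma hat_sub_p (u : Octonion) (p q : Octonion × Octonion) :
    hat u (p - q) = hat u p - hat u q := by
  simp only [hat, Prod.fst_sub, Prod.snd_sub, omul_sub_right, Prod.mk_sub_mk, Prod.mk.injEq]
  exact ⟨by abel, trivial⟩

lemma hat_neg_p (u : Octonion) (p : Octonion × Octonion) :
    hat u (-p) = -(hat u p) := by
  have := hat_sub_p u 0 p
  simpa [hat, omul, Prod.ext_iff] using this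

lemma key (u z : Octonion) (hu : oinner u u = 1) (q : Octonion × Octonion) :
    hat u (hat z (hat u q)) = -(hat (oreflect u z) q) := by
  have h1 : hat z (hat u q) = (-(2 * oinner z u)) • q - hat u (hat z q) :=
    eq_sub_of_add_eq (anticomm z u q)
  rw [h1, hat_sub_p, hat_smul_p, hat_sq, hu, oreflect, hat_sub_arg, hat_smul_arg]
  ext <;> simp [Prod.ext_iff] <;> module

/-- For purely imaginary unit octonions `v, w` and any octonion `x`,
`(v̂ ∘ ŵ) ∘ x̂ ∘ (ŵ ∘ v̂) = ŷ` where `y = s_v (s_w x)`: conjugation by `v̂ ∘ ŵ` acts as the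
composition of the reflection along `w` followed by the reflection along `v`. -/
theorem hat_conj_pair_reflections (v w : Octonion)
    (hv1 : oinner v oone = 0) (hw1 : oinner w oone = 0)
    (hv : oinner v v = 1) (hw : oinner w w = 1) :
    ∀ (x : Octonion) (p : Octonion × Octonion),
      hat v (hat w (hat x (hat w (hat v p)))) = hat (oreflect v (oreflect w x)) p := by
  intro x p
  rw [key w x hw (hat v p), hat_neg_p, key v (oreflect w x) hv p, neg_neg]
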